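/- arXiv:1705.03356 — 5 statements merged into one kernel-verified Lean document; each statement's English description precedes it below -/
import Mathlib

section
/- If t/f(t) has nonnegative coefficients and some coefficient a_k of z^k in t/f(t) is strictly positive, then for every n ≥ 0 the coefficient π_{kn+1}/(kn)! of the compositional inverse f^{[-1]} satisfies π_{kn+1} ≥ (kn)! · binomial(kn+1, n) · a_k^n > 0. -/
open PowerSeries Finset

lemma aux_pow_coeff_nonneg (u : PowerSeries ℝ) (hupos : ∀ n, 0 ≤ coeff n u) :
    ∀ m n, 0 ≤ coeff n (u ^ m) := by
  intro m
  induction m with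
  | zero => intro n; simp [coeff_one]; split <;> norm_num
  | succ m ih =>
    intro n
    rw [pow_succ, coeff_mul]
    exact Finset.sum_nonneg fun p _ => mul_nonneg (ih p.1) (hupos p.2)

lemma aux_pow_coeff_mono (u v : PowerSeries ℝ) (hv0 : ∀ n, 0 ≤ coeff n v)
    (hvu : ∀ n, coeff n v ≤ coeff n u) :
    ∀ m n, coeff n (v ^ m) ≤ coeff n (u ^ m) := by
  intro m
  induction m with
  | zero => intro n; simp
  | succ m ih =>
    intro n
    rw [pow_succ, pow_succ, coeff_mul, coeff_mul]
    apply Finset.sum_le_sum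
    intro p _
    exact mul_le_mul (ih p.1) (hvu p.2) (hv0 p.2)
      (aux_pow_coeff_nonneg u (fun j => le_trans (hv0 j) (hvu j)) m p.1)

lemma aux_binom (a : ℝ) (ha : 0 ≤ a) (k n : ℕ) (hk1 : 1 ≤ k) :
    (((k*n+1).choose n : ℝ)) * a ^ n ≤
      coeff (k*n) ((1 + C a * X ^ k) ^ (k*n+1)) := by
  set m := k*n+1 with hm
  have hexp : (1 + C a * X ^ k) ^ m
      = ∑ i ∈ range (m+1), (C a * X ^ k) ^ i * 1 ^ (m - i) * ((m.choose i : ℕ) : PowerSeries ℝ) := by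
    rw [add_comm (1 : PowerSeries ℝ), add_pow]
  rw [hexp, map_sum]
  have hterm : ∀ i, coeff (k*n) ((C a * X ^ k) ^ i * 1 ^ (m - i) * ((m.choose i : ℕ) : PowerSeries ℝ))
      = if k * n = k * i then (m.choose i : ℝ) * a ^ i else 0 := by
    intro i
    have hc : ((m.choose i : ℕ) : PowerSeries ℝ) = C ((m.choose i : ℕ) : ℝ) := by simp
    rw [mul_pow, one_pow, mul_one, ← map_pow, ← pow_mul, hc,
      mul_comm (C (a ^ i) * X ^ (k * i)), ← mul_assoc, ← map_mul, coeff_C_mul, coeff_X_pow]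
    split <;> ring
  have hle : n ≤ k * n := Nat.le_mul_of_pos_left n (by omega)
  have hn_mem : n ∈ range (m+1) := by
    rw [Finset.mem_range]; omega
  refine le_trans ?_ (Finset.single_le_sum
    (f := fun i => coeff (k*n) ((C a * X ^ k) ^ i * 1 ^ (m - i) * ((m.choose i : ℕ) : PowerSeries ℝ)))
    (fun i _ => by simp only [hterm]; split <;> positivity) hn_mem)
  simp only [hterm, if_pos rfl]
  exact le_refl _

/-- Let `f` be a power series with `f(0) = 0`, `f'(0) = 1`, such that
`u = t/f(t)` (the series with `f·u = t`) has nonnegative coefficients, and let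
`π_n = (n-1)! · [t^{n-1}] u^n` (the value at `0` of the `(n-1)`-st derivative of
`(t/f(t))^n`, which by Lagrange inversion equals `n!` times the `n`-th coefficient of
the compositional inverse `f^{[-1]}`). If the coefficient `a_k` of `z^k` in `u` is
strictly positive, then for every `n ≥ 0`,
`π_{kn+1} ≥ (kn)! · binomial(kn+1, n) · a_k^n > 0`. -/
theorem lagrange_coefficient_lower_bound (f u : PowerSeries ℝ)
    (hf0 : constantCoeff f = 0) (hf1 : coeff 1 f = 1)
    (hu : f * u = X) (hupos : ∀ n, 0 ≤ coeff n u)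
    (π : ℕ → ℝ) (hπ : ∀ n, 1 ≤ n → π n = (n - 1).factorial * coeff (n - 1) (u ^ n))
    (k : ℕ) (hk : 0 < coeff k u) :
    ∀ n : ℕ,
      ((k * n).factorial : ℝ) * ((k * n + 1).choose n) * (coeff k u) ^ n ≤ π (k * n + 1)
      ∧ 0 < π (k * n + 1) := by
  -- constant coefficient of u is 1
  have hu0 : coeff 0 u = 1 := by
    have h := congrArg (coeff 1) hu
    rw [coeff_mul] at h
    simp [Finset.Nat.antidiagonal_succ, hf0, hf1] at h
    simpa [coeff_zero_eq_constantCoeff, hf0] using h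
  intro n
  have hπeq : π (k * n + 1) = ((k * n).factorial : ℝ) * coeff (k * n) (u ^ (k * n + 1)) := by
    have := hπ (k * n + 1) (by omega)
    simpa using this
  set a := coeff k u with haa
  rcases Nat.eq_zero_or_pos k with hk0 | hk1
  · -- k = 0 : then a = 1 and π 1 = 1
    subst hk0
    have ha1 : a = 1 := by rw [haa, hu0]
    have hπ1 : π (0 * n + 1) = 1 := by
      rw [hπeq]; simp [hu0]
    rw [hπ1, ha1]
    constructor
    · have hch : ((0 * n + 1).choose n : ℝ) ≤ 1 := by
        rcases Nat.lt_or_ge 1 n with h | h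
        · have : (1).choose n = 0 := Nat.choose_eq_zero_of_lt h
          simp [this]
        · interval_cases n <;> norm_num
      simpa using hch
    · norm_num
  · -- k ≥ 1
    have ha : 0 ≤ a := le_of_lt hk
    set v : PowerSeries ℝ := 1 + C a * X ^ k with hv
    have hvcoeff : ∀ j, coeff j v = (if j = 0 then 1 else 0) + (if j = k then a else 0) := by
      intro j
      rw [hv, map_add, coeff_one, coeff_C_mul, coeff_X_pow]
      split <;> split <;> ring
    have hv0 : ∀ j, 0 ≤ coeff j v := by
      intro j; rw [hvcoeff]; split <;> split <;> simp_all
    have hvu : ∀ j, coeff j v ≤ coeff j u := by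
      intro j
      rw [hvcoeff]
      rcases eq_or_ne j 0 with rfl | h0
      · have hk0 : (0 : ℕ) ≠ k := by omega
        simp [hk0, hu0]
      · rcases eq_or_ne j k with rfl | hjk
        · simp [h0, haa]
        · simp [h0, hjk, hupos j]
    have hmono := aux_pow_coeff_mono u v hv0 hvu (k * n + 1) (k * n)
    have hbin := aux_binom a ha k n hk1
    have hkey : ((k * n + 1).choose n : ℝ) * a ^ n ≤ coeff (k * n) (u ^ (k * n + 1)) :=
      le_trans hbin hmono
    have hfac : (0 : ℝ) < ((k * n).factorial : ℝ) := by positivity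
    constructor
    · rw [hπeq, mul_assoc]
      exact mul_le_mul_of_nonneg_left hkey (le_of_lt hfac)
    · rw [hπeq]
      have hch : (0 : ℝ) < ((k * n + 1).choose n : ℝ) := by
        have : 0 < (k * n + 1).choose n :=
          Nat.choose_pos (by nlinarith [Nat.le_mul_of_pos_left n hk1])
        exact_mod_cast this
      have : (0 : ℝ) < ((k * n + 1).choose n : ℝ) * a ^ n := by positivity
      exact mul_pos hfac (lt_of_lt_of_le this hkey)
end

section
/- Let φ(z) = 1 - a z + z² r(z) be a real power series with a > 0 and r having nonnegative coefficients, and suppose φ has a positive real root z₀ within its disc of convergence. Then there is a coefficient-wise inequality 1/φ(z) ≥ 1/(1 - z/z₀), i.e., the coefficient of z^k in 1/φ(z) is at least z₀^{-k} for all k ≥ 0. -/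
open PowerSeries

/-- Let `φ(z) = 1 - az + z²r(z)` with `a > 0` and `r` having nonnegative
coefficients, and suppose `φ` has a positive real root `z₀` within its disc of
convergence (i.e. `Σ coeff_n(φ)·z₀ⁿ` converges to `0`). Then coefficient-wise
`1/φ(z) ≥ 1/(1 - z/z₀)`: the coefficient of `z^k` in `φ⁻¹` is at least `z₀^{-k}`. -/
theorem inv_phi_coeff_lower_bound (a : ℝ) (ha : 0 < a)
    (r : PowerSeries ℝ) (hr : ∀ n, 0 ≤ coeff n r)
    (φ : PowerSeries ℝ) (hφ : φ = 1 - C a * X + X ^ 2 * r)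
    (z₀ : ℝ) (hz₀ : 0 < z₀)
    (hsum : Summable fun n => coeff n φ * z₀ ^ n)
    (hroot : ∑' n : ℕ, coeff n φ * z₀ ^ n = 0) :
    ∀ k : ℕ, (z₀⁻¹) ^ k ≤ coeff k φ⁻¹ := by
  -- coefficients of φ
  have hc0 : coeff 0 φ = 1 := by simp [hφ]
  have hc1 : coeff 1 φ = -a := by
    have h := coeff_X_pow_mul' r 2 1
    simp only [hφ, map_add, map_sub]; rw [h]; simp
  have hcn : ∀ n, coeff (n+2) φ = coeff n r := by
    intro n
    have h := coeff_X_pow_mul r 2 n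
    simp only [hφ, map_add, map_sub]; rw [h]; simp [coeff_one, coeff_C]
  have hcc : constantCoeff φ = 1 := by rw [← coeff_zero_eq_constantCoeff]; exact hc0
  set b : ℕ → ℝ := fun k => coeff k φ⁻¹ with hb
  have hb0 : b 0 = 1 := by
    simp only [hb, coeff_zero_eq_constantCoeff, constantCoeff_inv, hcc, inv_one]
  -- recurrence
  have hmul : φ * φ⁻¹ = 1 := PowerSeries.mul_inv_cancel φ (by rw [hcc]; norm_num)
  have hrec : ∀ k : ℕ, b (k+1) = a * b k - ∑ m ∈ Finset.range k, coeff m r * b (k-1-m) := by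
    intro k
    have h1 : coeff (k+1) (φ * φ⁻¹) = 0 := by rw [hmul]; simp [coeff_one]
    rw [coeff_mul, Finset.Nat.sum_antidiagonal_eq_sum_range_succ_mk] at h1
    rw [Finset.sum_range_succ', Finset.sum_range_succ'] at h1
    simp only [hc0, hc1, one_mul] at h1
    have h2 : ∀ m ∈ Finset.range k, coeff (m+1+1) φ * coeff (k+1-(m+1+1)) φ⁻¹
        = coeff m r * b (k-1-m) := by
      intro m hm
      rw [hcn m]
      have he : k+1-(m+1+1) = k-1-m := by omega
      rw [he]
    rw [Finset.sum_congr rfl h2] at h1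
    have h3 : k + 1 - 1 = k := by omega
    rw [h3] at h1
    simp only [Nat.sub_zero] at h1
    simp only [hb]
    linarith [h1]
  -- summability of r at z₀
  have hsum2 : Summable fun n => coeff n r * z₀ ^ (n+2) := by
    have := (summable_nat_add_iff 2).mpr hsum
    simpa only [hcn] using this
  set R : ℝ := ∑' n, coeff n r * z₀ ^ (n+2) with hR
  have hRnn : 0 ≤ R := tsum_nonneg fun n => mul_nonneg (hr n) (by positivity)
  -- the root equation : 0 = 1 - a z₀ + R
  have hkey : a * z₀ = 1 + R := by
    have e1 := Summable.tsum_eq_zero_add hsum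
    have e2 := Summable.tsum_eq_zero_add ((summable_nat_add_iff 1).mpr hsum)
    simp only [hc0, pow_zero, mul_one] at e1
    simp only [hc1, pow_one] at e2
    have e3 : (∑' n, coeff (n+1+1) φ * z₀ ^ (n+1+1)) = R := by
      rw [hR]
      congr 1
      funext n
      rw [hcn n]
    rw [e3] at e2
    rw [e2] at e1
    rw [hroot] at e1
    simp only [zero_add, pow_one] at e1
    linarith
  -- c k = z₀^k * b k is monotone
  set c : ℕ → ℝ := fun k => z₀ ^ k * b k with hc
  have hc0' : c 0 = 1 := by simp [hc, hb0]
  have hmono : ∀ k, ∀ i ≤ k, c i ≤ c k := by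
    intro k
    induction k with
    | zero => intro i hi; interval_cases i; rfl
    | succ k ih =>
      have hck1 : 1 ≤ c k := by rw [← hc0']; exact ih 0 (Nat.zero_le k)
      have hbk : 0 ≤ b k := by
        have hp : 0 < z₀ ^ k := pow_pos hz₀ k
        have hck1' : 1 ≤ z₀ ^ k * b k := hck1
        nlinarith
      have hstep : c k ≤ c (k+1) := by
        have hterm : ∀ m ∈ Finset.range k,
            z₀ ^ (k+1) * (coeff m r * b (k-1-m)) ≤ coeff m r * z₀ ^ (m+2) * c k := by
          intro m hm
          simp only [Finset.mem_range] at hm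
          have h1 : c (k-1-m) ≤ c k := ih _ (by omega)
          have h2 : z₀ ^ (k+1) * b (k-1-m) = z₀ ^ (m+2) * c (k-1-m) := by
            simp only [hc]
            rw [← mul_assoc, ← pow_add]
            congr 2
            omega
          calc z₀ ^ (k+1) * (coeff m r * b (k-1-m))
              = coeff m r * (z₀ ^ (m+2) * c (k-1-m)) := by rw [← h2]; ring
            _ ≤ coeff m r * (z₀ ^ (m+2) * c k) := by
                apply mul_le_mul_of_nonneg_left _ (hr m)
                exact mul_le_mul_of_nonneg_left h1 (by positivity)
            _ = coeff m r * z₀ ^ (m+2) * c k := by ring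
        have hsumle : ∑ m ∈ Finset.range k, coeff m r * z₀ ^ (m+2) ≤ R := by
          apply Summable.sum_le_tsum _ _ hsum2
          intro m _
          exact mul_nonneg (hr m) (by positivity)
        have hck0 : 0 ≤ c k := le_trans zero_le_one hck1
        have e : c (k+1) = z₀ ^ (k+1) * (a * b k)
            - ∑ m ∈ Finset.range k, z₀ ^ (k+1) * (coeff m r * b (k-1-m)) := by
          simp only [hc, hrec k, mul_sub, Finset.mul_sum]
        have e2 : z₀ ^ (k+1) * (a * b k) = (1 + R) * c k := by
          simp only [hc]
          calc z₀ ^ (k+1) * (a * b k) = (a * z₀) * (z₀ ^ k * b k) := by ring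
            _ = (1 + R) * (z₀ ^ k * b k) := by rw [hkey]
        have hle : ∑ m ∈ Finset.range k, z₀ ^ (k+1) * (coeff m r * b (k-1-m)) ≤ R * c k := by
          calc ∑ m ∈ Finset.range k, z₀ ^ (k+1) * (coeff m r * b (k-1-m))
              ≤ ∑ m ∈ Finset.range k, coeff m r * z₀ ^ (m+2) * c k :=
                Finset.sum_le_sum hterm
            _ = (∑ m ∈ Finset.range k, coeff m r * z₀ ^ (m+2)) * c k := by
                rw [Finset.sum_mul]
            _ ≤ R * c k := mul_le_mul_of_nonneg_right hsumle hck0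
        rw [e, e2]
        nlinarith [hle]
      intro i hi
      rcases Nat.lt_or_ge i (k+1) with h | h
      · exact le_trans (ih i (by omega)) hstep
      · have : i = k + 1 := by omega
        rw [this]
    
  intro k
  have h1 : 1 ≤ c k := by rw [← hc0']; exact hmono k 0 (Nat.zero_le k)
  have h2 : (z₀⁻¹) ^ k * c k = b k := by
    simp only [hc]
    rw [← mul_assoc, ← mul_pow, inv_mul_cancel₀ (ne_of_gt hz₀), one_pow, one_mul]
  have h3 : (z₀⁻¹ : ℝ) ^ k ≤ b k := by
    rw [← h2]
    have hp : 0 < (z₀⁻¹ : ℝ) ^ k := by positivity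
    nlinarith
  exact h3
end

section
/- For a power series φ(z) = 1 - az + z²r(z) as above with positive root z₀, and any n ≥ 1, the coefficient of z^k in φ(z)^{-n} is at least binomial(n+k-1, k) · z₀^{-k}. -/
open PowerSeries Finset

private lemma hockey_stick (m : ℕ) : ∀ k : ℕ,
    ∑ i ∈ Finset.range (k+1), (m+i).choose i = (m+1+k).choose k := by
  intro k
  induction k with
  | zero => simp
  | succ k ih =>
    rw [Finset.sum_range_succ, ih]
    have h1 : m + (k+1) = m + 1 + k := by ring
    have h2 : m + 1 + (k+1) = (m + 1 + k) + 1 := by ring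
    rw [h1, h2, Nat.choose_succ_succ]

/-- For `φ(z) = 1 - az + z²r(z)` with `a > 0`, `r` with nonnegative
coefficients, and a positive real root `z₀` of `φ` within the disc of convergence,
for every `n ≥ 1` the coefficient of `z^k` in `φ(z)^{-n}` is at least
`binomial(n+k-1, k) · z₀^{-k}`. -/
theorem inv_phi_pow_coeff_lower_bound (a : ℝ) (ha : 0 < a)
    (r : PowerSeries ℝ) (hr : ∀ n, 0 ≤ coeff n r)
    (φ : PowerSeries ℝ) (hφ : φ = 1 - C a * X + X ^ 2 * r)
    (z₀ : ℝ) (hz₀ : 0 < z₀)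
    (hsum : Summable fun n => coeff n φ * z₀ ^ n)
    (hroot : ∑' n : ℕ, coeff n φ * z₀ ^ n = 0) :
    ∀ n k : ℕ, 1 ≤ n →
      ((n + k - 1).choose k : ℝ) * (z₀⁻¹) ^ k ≤ coeff k (φ⁻¹ ^ n) := by
  have hz₀' : z₀ ≠ 0 := ne_of_gt hz₀
  -- coefficients of φ
  have hc0 : coeff 0 φ = 1 := by
    simp [hφ]
  have hc1 : coeff 1 φ = -a := by
    simp [hφ, PowerSeries.coeff_one]
    rw [show (X:PowerSeries ℝ)^2 * r = X^2 * r from rfl]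
    have : coeff 1 ((X:PowerSeries ℝ)^2 * r) = 0 := by
      rw [PowerSeries.coeff_mul]
      apply Finset.sum_eq_zero
      intro p hp
      rw [Finset.HasAntidiagonal.mem_antidiagonal] at hp
      have : p.1 < 2 := by omega
      rw [PowerSeries.coeff_X_pow]
      simp [Nat.ne_of_lt this]
    simp [this]
  have hc2 : ∀ i, coeff (i+2) φ = coeff i r := by
    intro i
    simp [hφ]
  have hconst : constantCoeff φ = 1 := by
    have := hc0; rwa [PowerSeries.coeff_zero_eq_constantCoeff] at this
  -- summability of r at z₀ and the key equation
  have hsum2 : Summable fun n => coeff n r * z₀ ^ (n+2) := by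
    have h := (summable_nat_add_iff (f := fun n => coeff n φ * z₀ ^ n) 2).2 hsum
    refine h.congr fun n => ?_
    rw [hc2 n]
  have hsumr : Summable fun n => coeff n r * z₀ ^ n := by
    have h := hsum2.div_const (z₀ ^ 2)
    refine h.congr fun n => ?_
    field_simp [pow_add]
    ring
  set R : ℝ := ∑' n, coeff n r * z₀ ^ n with hR
  have hRnn : 0 ≤ R := tsum_nonneg fun n => mul_nonneg (hr n) (by positivity)
  have key : a * z₀ = 1 + z₀ ^ 2 * R := by
    have h0 := Summable.tsum_eq_zero_add hsum
    have hsum1 := (summable_nat_add_iff (f := fun n => coeff n φ * z₀ ^ n) 1).2 hsum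
    have h1 := Summable.tsum_eq_zero_add hsum1
    rw [h1] at h0
    have h2 : (∑' n : ℕ, coeff (n+1+1) φ * z₀ ^ (n+1+1)) = z₀ ^ 2 * R := by
      have : (∑' n : ℕ, coeff (n+1+1) φ * z₀ ^ (n+1+1))
          = ∑' n : ℕ, (coeff n r * z₀ ^ n) * z₀ ^ 2 := by
        congr 1; funext n
        rw [show n+1+1 = n+2 from rfl, hc2 n, pow_add]; ring
      rw [this, tsum_mul_right, ← hR]; ring
    rw [h2, hc0, hc1] at h0
    rw [hroot] at h0
    simp at h0
    linarith
  -- key: a = z₀⁻¹ + z₀ * R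
  have keyA : a - z₀ * R = z₀⁻¹ := by
    field_simp
    linarith [key]
  -- the inverse
  set b : ℕ → ℝ := fun k => coeff k φ⁻¹ with hb
  have hone : φ * φ⁻¹ = 1 := PowerSeries.mul_inv_cancel φ (by rw [hconst]; norm_num)
  have hb0 : b 0 = 1 := by
    simp [hb, PowerSeries.coeff_zero_eq_constantCoeff, PowerSeries.constantCoeff_inv, hconst]
  have hrec : ∀ k, b (k+1) = a * b k - ∑ i ∈ Finset.range k, coeff i r * b (k-1-i) := by
    intro k
    have h := congrArg (coeff (k+1)) hone
    rw [PowerSeries.coeff_mul, Finset.Nat.sum_antidiagonal_eq_sum_range_succ_mk] at h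
    have hrhs : coeff (k+1) (1 : PowerSeries ℝ) = 0 := by
      simp [PowerSeries.coeff_one]
    rw [hrhs, Finset.sum_range_succ', Finset.sum_range_succ'] at h
    -- h : ∑ i in range k, f(i+2) + f 1 + f 0 = 0
    simp only [hc0, hc1, hc2] at h
    have hkk : ∀ i : ℕ, k + 1 - (i + 1 + 1) = k - 1 - i := by intro i; omega
    have hk1 : k + 1 - 1 = k := by omega
    simp only [hkk, hk1, Nat.sub_zero] at h
    have : (∑ i ∈ Finset.range k, coeff i r * b (k-1-i))
        + (-a) * b k + 1 * b (k+1) = 0 := h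
    linarith [this]
  -- main inductive claim
  have main : ∀ k, z₀⁻¹ ^ k ≤ b k ∧ b k ≤ z₀ * b (k+1) := by
    intro k
    induction k using Nat.strong_induction_on with
    | _ k ih =>
      have part1 : z₀⁻¹ ^ k ≤ b k := by
        match k with
        | 0 => simp [hb0]
        | (m+1) =>
          have hm := ih m (by omega)
          calc z₀⁻¹ ^ (m+1) = z₀⁻¹ * z₀⁻¹ ^ m := by ring
            _ ≤ z₀⁻¹ * b m := by
                apply mul_le_mul_of_nonneg_left hm.1 (by positivity)
            _ ≤ z₀⁻¹ * (z₀ * b (m+1)) := by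
                apply mul_le_mul_of_nonneg_left hm.2 (by positivity)
            _ = b (m+1) := by field_simp
      have hbknn : 0 ≤ b k := le_trans (by positivity) part1
      -- chain lemma
      have chain : ∀ d j, j + d = k → b j ≤ z₀ ^ d * b k := by
        intro d
        induction d with
        | zero => intro j hj; simp at hj; simp [hj]
        | succ d ihd =>
          intro j hj
          have hjk : j < k := by omega
          have h1 : b j ≤ z₀ * b (j+1) := (ih j hjk).2
          have h2 : b (j+1) ≤ z₀ ^ d * b k := ihd (j+1) (by omega)
          calc b j ≤ z₀ * b (j+1) := h1
            _ ≤ z₀ * (z₀ ^ d * b k) := by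
                apply mul_le_mul_of_nonneg_left h2 (le_of_lt hz₀)
            _ = z₀ ^ (d+1) * b k := by ring
      -- bound on the sum
      have hsumb : (∑ i ∈ Finset.range k, coeff i r * b (k-1-i))
          ≤ z₀ * R * b k := by
        have step1 : ∀ i ∈ Finset.range k, coeff i r * b (k-1-i)
            ≤ (coeff i r * z₀ ^ (i+1)) * b k := by
          intro i hi
          rw [Finset.mem_range] at hi
          have hj : (k-1-i) + (i+1) = k := by omega
          have := chain (i+1) (k-1-i) hj
          calc coeff i r * b (k-1-i) ≤ coeff i r * (z₀ ^ (i+1) * b k) :=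
                mul_le_mul_of_nonneg_left this (hr i)
            _ = (coeff i r * z₀ ^ (i+1)) * b k := by ring
        calc (∑ i ∈ Finset.range k, coeff i r * b (k-1-i))
            ≤ ∑ i ∈ Finset.range k, (coeff i r * z₀ ^ (i+1)) * b k :=
              Finset.sum_le_sum step1
          _ = (∑ i ∈ Finset.range k, coeff i r * z₀ ^ (i+1)) * b k := by
              rw [Finset.sum_mul]
          _ ≤ z₀ * R * b k := by
              apply mul_le_mul_of_nonneg_right _ hbknn
              have : (∑ i ∈ Finset.range k, coeff i r * z₀ ^ (i+1))
                  = (∑ i ∈ Finset.range k, coeff i r * z₀ ^ i) * z₀ := by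
                rw [Finset.sum_mul]; congr 1; funext i; ring
              rw [this]
              have hle : (∑ i ∈ Finset.range k, coeff i r * z₀ ^ i) ≤ R :=
                Summable.sum_le_tsum _ (fun i _ => mul_nonneg (hr i) (by positivity)) hsumr
              calc (∑ i ∈ Finset.range k, coeff i r * z₀ ^ i) * z₀ ≤ R * z₀ :=
                    mul_le_mul_of_nonneg_right hle (le_of_lt hz₀)
                _ = z₀ * R := by ring
      have part2 : b k ≤ z₀ * b (k+1) := by
        have h := hrec k
        have : b (k+1) ≥ a * b k - z₀ * R * b k := by
          rw [h]; linarith [hsumb]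
        have h2 : a * b k - z₀ * R * b k = z₀⁻¹ * b k := by
          rw [← keyA]; ring
        have h3 : z₀⁻¹ * b k ≤ b (k+1) := by linarith [this, h2.symm.le]
        calc b k = z₀ * (z₀⁻¹ * b k) := by field_simp
          _ ≤ z₀ * b (k+1) := mul_le_mul_of_nonneg_left h3 (le_of_lt hz₀)
      exact ⟨part1, part2⟩
  -- step 2: powers
  have pow_bound : ∀ n k : ℕ, ((n + k).choose k : ℝ) * z₀⁻¹ ^ k ≤ coeff k (φ⁻¹ ^ (n+1)) := by
    intro n
    induction n with
    | zero =>
      intro k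
      simp only [zero_add, pow_one, Nat.choose_self]
      have := (main k).1
      simpa using this
    | succ n ihn =>
      intro k
      have hpow : φ⁻¹ ^ (n+2) = φ⁻¹ ^ (n+1) * φ⁻¹ := by ring
      rw [hpow, PowerSeries.coeff_mul, Finset.Nat.sum_antidiagonal_eq_sum_range_succ_mk]
      have step : ∀ i ∈ Finset.range (k+1),
          ((n+i).choose i : ℝ) * z₀⁻¹ ^ k ≤ coeff i (φ⁻¹ ^ (n+1)) * coeff (k-i) φ⁻¹ := by
        intro i hi
        rw [Finset.mem_range] at hi
        have h1 := ihn i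
        have h2 := (main (k-i)).1
        have hnn1 : (0:ℝ) ≤ ((n+i).choose i : ℝ) * z₀⁻¹ ^ i := by positivity
        have hnn2 : (0:ℝ) ≤ z₀⁻¹ ^ (k-i) := by positivity
        have := mul_le_mul h1 h2 hnn2 (le_trans hnn1 h1)
        calc ((n+i).choose i : ℝ) * z₀⁻¹ ^ k
            = (((n+i).choose i : ℝ) * z₀⁻¹ ^ i) * z₀⁻¹ ^ (k-i) := by
              rw [mul_assoc, ← pow_add]
              congr 2
              omega
          _ ≤ coeff i (φ⁻¹ ^ (n+1)) * coeff (k-i) φ⁻¹ := this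
      calc ((n+1+k).choose k : ℝ) * z₀⁻¹ ^ k
          = ∑ i ∈ Finset.range (k+1), ((n+i).choose i : ℝ) * z₀⁻¹ ^ k := by
            rw [← Finset.sum_mul]
            congr 1
            rw [← Nat.cast_sum]
            rw [hockey_stick n k]
        _ ≤ ∑ i ∈ Finset.range (k+1), coeff i (φ⁻¹ ^ (n+1)) * coeff (k-i) φ⁻¹ :=
            Finset.sum_le_sum step
  intro n k hn
  obtain ⟨m, rfl⟩ : ∃ m, n = m + 1 := ⟨n - 1, by omega⟩
  have hm : m + 1 + k - 1 = m + k := by omega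
  rw [hm]
  exact pow_bound m k
end

section
/- The formal power series y(z) with y(0) = 0 satisfying the algebraic equation y - y² + y³/6 = z (i.e., y is the compositional inverse of t - t² + t³/6) has all coefficients nonnegative. -/
open PowerSeries

/-- The formal power series `y(z)` with `y(0) = 0` satisfying
`y - y² + y³/6 = z` (the generating series of the operad of 1-alia algebras,
the compositional inverse of `t - t² + t³/6`) has all coefficients nonnegative. -/
theorem alia_series_nonneg (y : PowerSeries ℚ)
    (h0 : constantCoeff y = 0)
    (heq : y - y ^ 2 + C (1 / 6 : ℚ) * y ^ 3 = X) :
    ∀ n : ℕ, 0 ≤ coeff n y := by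
  -- g = 1 - y + (1/6) y², the "derivative-like" factor; y * g = X.
  set g : PowerSeries ℚ := 1 - y + C (1 / 6 : ℚ) * y ^ 2 with hgdef
  have hg0 : constantCoeff g = 1 := by
    simp [hgdef, map_add, map_sub, map_mul, map_pow, h0]
  -- u = g⁻¹
  set u : PowerSeries ℚ := invOfUnit g 1 with hudef
  have hgu : g * u = 1 := mul_invOfUnit g 1 (by simpa using hg0)
  have hyg : y * g = X := by rw [hgdef]; linear_combination heq
  have hy : y = X * u := by
    calc y = y * (g * u) := by rw [hgu, mul_one]
    _ = (y * g) * u := by ring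
    _ = X * u := by rw [hyg]
  have hu : u = 1 + y * u - C (1 / 6 : ℚ) * (y * (y * u)) := by
    linear_combination hgu
  -- w = u - (1/3) y u
  set w : PowerSeries ℚ := u - C (1 / 3 : ℚ) * (y * u) with hwdef
  have hyw : y * w = y * u - C (1 / 3 : ℚ) * (y * (y * u)) := by
    rw [hwdef]; ring
  have hc0 : coeff 0 y = 0 := by
    rw [coeff_zero_eq_constantCoeff]; exact h0
  have main : ∀ n : ℕ, 0 ≤ coeff n y ∧ 0 ≤ coeff n u ∧ 0 ≤ coeff n w := by
    intro n
    induction n using Nat.strong_induction_on with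
    | _ n IH =>
      -- first: coefficient of y
      have hcy : 0 ≤ coeff n y := by
        cases n with
        | zero => rw [hc0]
        | succ m =>
          rw [hy, coeff_succ_X_mul]
          exact (IH m (Nat.lt_succ_self m)).2.1
      have hyk : ∀ k, k ≤ n → 0 ≤ coeff k y := by
        intro k hk
        rcases lt_or_eq_of_le hk with h | h
        · exact (IH k h).1
        · rw [h]; exact hcy
      -- key convolution lemma
      have key : ∀ k, k ≤ n → ∀ f : PowerSeries ℚ,
          (∀ j, j < n → 0 ≤ coeff j f) → 0 ≤ coeff k (y * f) := by
        intro k hk f hf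
        rw [coeff_mul]
        apply Finset.sum_nonneg
        intro p hp
        have hsum : p.1 + p.2 = k := Finset.HasAntidiagonal.mem_antidiagonal.mp hp
        by_cases h2 : p.2 < n
        · exact mul_nonneg (hyk p.1 (le_trans (Nat.le.intro hsum) hk)) (hf p.2 h2)
        · have h2' : n ≤ p.2 := not_lt.mp h2
          have hp1 : p.1 = 0 := by omega
          rw [hp1, hc0, zero_mul]
      have hyu : ∀ k, k ≤ n → 0 ≤ coeff k (y * u) :=
        fun k hk => key k hk u (fun j hj => (IH j hj).2.1)
      have hyyu : 0 ≤ coeff n (y * (y * u)) :=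
        key n le_rfl (y * u) (fun j hj => hyu j (le_of_lt hj))
      have hyw' : 0 ≤ coeff n (y * w) :=
        key n le_rfl w (fun j hj => (IH j hj).2.2)
      -- coefficient identities
      have hone : (0 : ℚ) ≤ coeff n (1 : PowerSeries ℚ) := by
        rw [coeff_one]; split <;> norm_num
      have e1 : coeff n u = coeff n (1 : PowerSeries ℚ) + coeff n (y * u)
          - (1 / 6) * coeff n (y * (y * u)) := by
        conv_lhs => rw [hu]
        simp [map_add, map_sub, coeff_C_mul]
      have e2 : coeff n w = coeff n u - (1 / 3) * coeff n (y * u) := by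
        rw [hwdef]
        simp [map_sub, coeff_C_mul]
      have e3 : coeff n (y * w) = coeff n (y * u)
          - (1 / 3) * coeff n (y * (y * u)) := by
        rw [hyw]
        simp [map_sub, coeff_C_mul]
      have hbw : 0 ≤ coeff n w := by linarith
      have hbu : 0 ≤ coeff n u := by
        have := hyu n le_rfl
        linarith
      exact ⟨hcy, hbu, hbw⟩
  exact fun n => (main n).1
end

section
/- Let c, d be positive reals with d ≤ 3c²/8. Then the quadratic polynomial φ(z) = 1 - (c/2)z + (d/6)z² has a smallest positive real root z₁ = 3(c/2 - √(c²/4 - 2d/3))/d, and z/(z - (c/2)z² + (d/6)z³) = 1/φ(z) has nonnegative power series coefficients, each at least z₁^{-k}. -/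
open PowerSeries

set_option maxHeartbeats 1600000 in
/-- For positive reals `c, d` with `d ≤ 3c²/8`, the quadratic
`φ(z) = 1 - (c/2)z + (d/6)z²` has smallest positive real root
`z₁ = 3(c/2 - √(c²/4 - 2d/3))/d`, and `z/(z - (c/2)z² + (d/6)z³) = 1/φ(z)` has
power series coefficients that are each at least `z₁^{-k}` (in particular
nonnegative). -/
theorem quadratic_phi_root_and_inverse_bound (c d : ℝ)
    (hc : 0 < c) (hd : 0 < d) (hcd : d ≤ 3 * c ^ 2 / 8)
    (z₁ : ℝ) (hz₁ : z₁ = 3 * (c / 2 - Real.sqrt (c ^ 2 / 4 - 2 * d / 3)) / d)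
    (φ : PowerSeries ℝ) (hφ : φ = 1 - C (c / 2) * X + C (d / 6) * X ^ 2) :
    0 < z₁ ∧
    1 - c / 2 * z₁ + d / 6 * z₁ ^ 2 = 0 ∧
    (∀ z : ℝ, 0 < z → 1 - c / 2 * z + d / 6 * z ^ 2 = 0 → z₁ ≤ z) ∧
    (X - C (c / 2) * X ^ 2 + C (d / 6) * X ^ 3) * φ⁻¹ = X ∧
    (∀ k : ℕ, (z₁⁻¹) ^ k ≤ coeff k φ⁻¹) := by
  set s : ℝ := Real.sqrt (c ^ 2 / 4 - 2 * d / 3) with hs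
  have hs0 : 0 ≤ s := Real.sqrt_nonneg _
  have hs2 : s ^ 2 = c ^ 2 / 4 - 2 * d / 3 := Real.sq_sqrt (by nlinarith)
  have hslt : s < c / 2 := by nlinarith
  have hz₁pos : 0 < z₁ := by
    rw [hz₁]
    have : 0 < c / 2 - s := by linarith
    positivity
  have hroot : 1 - c / 2 * z₁ + d / 6 * z₁ ^ 2 = 0 := by
    rw [hz₁]; field_simp; nlinarith [hs2]
  have hmin : ∀ z : ℝ, 0 < z → 1 - c / 2 * z + d / 6 * z ^ 2 = 0 → z₁ ≤ z := by
    intro z hz hzr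
    by_contra hlt
    push_neg at hlt
    set z₂ : ℝ := 3 * (c / 2 + s) / d with hz₂
    have hz₂ge : z₁ ≤ z₂ := by
      rw [hz₁, hz₂]
      gcongr
      linarith
    have hsum : z₁ + z₂ = 3 * c / d := by rw [hz₁, hz₂]; field_simp; ring
    have hprod : z₁ * z₂ = 6 / d := by
      rw [hz₁, hz₂]; field_simp; nlinarith [hs2]
    have h1 : 0 < z₁ - z := by linarith
    have h2 : 0 < z₂ - z := by linarith
    have hpos := mul_pos h1 h2
    have key : (z₁ - z) * (z₂ - z) = 6 / d * (1 - c / 2 * z + d / 6 * z ^ 2) := by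
      have e : (z₁ - z) * (z₂ - z) = z₁ * z₂ - (z₁ + z₂) * z + z ^ 2 := by ring
      rw [e, hsum, hprod]
      field_simp
      ring
    rw [hzr, mul_zero] at key
    linarith
  have hcc : constantCoeff φ = 1 := by rw [hφ]; simp
  have hmul : φ * φ⁻¹ = 1 := PowerSeries.mul_inv_cancel φ (by rw [hcc]; norm_num)
  have hX : (X - C (c / 2) * X ^ 2 + C (d / 6) * X ^ 3) * φ⁻¹ = X := by
    have hfac : (X - C (c / 2) * X ^ 2 + C (d / 6) * X ^ 3) = X * φ := by rw [hφ]; ring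
    rw [hfac, mul_assoc, hmul, mul_one]
  refine ⟨hz₁pos, hroot, hmin, hX, ?_⟩
  -- coefficients of φ⁻¹
  have h0 : (1 - C (c / 2) * X + C (d / 6) * X ^ 2) * φ⁻¹ = 1 := by
    rw [← hφ]; exact hmul
  have ha0 : coeff 0 φ⁻¹ = 1 := by
    rw [coeff_zero_eq_constantCoeff, PowerSeries.constantCoeff_inv, hcc]
    norm_num
  have ha1 : coeff 1 φ⁻¹ = c / 2 := by
    have h := congrArg (coeff 1) h0
    rw [add_mul, sub_mul, one_mul, mul_assoc, mul_assoc, pow_two, mul_assoc] at h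
    rw [map_add, map_sub, coeff_C_mul, coeff_C_mul, coeff_succ_X_mul, coeff_succ_X_mul,
      coeff_zero_X_mul, coeff_one] at h
    rw [coeff_zero_eq_constantCoeff, PowerSeries.constantCoeff_inv, hcc] at h
    simp at h
    linarith
  have hrec : ∀ n : ℕ, coeff (n + 2) φ⁻¹ =
      c / 2 * coeff (n + 1) φ⁻¹ - d / 6 * coeff n φ⁻¹ := by
    intro n
    have h := congrArg (coeff (n + 2)) h0
    rw [add_mul, sub_mul, one_mul, mul_assoc, mul_assoc, pow_two, mul_assoc] at h
    rw [map_add, map_sub, coeff_C_mul, coeff_C_mul, coeff_succ_X_mul, coeff_succ_X_mul,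
      coeff_succ_X_mul, coeff_one] at h
    simp at h
    linarith
  -- roots of t² - (c/2)t + d/6 : r = (c/2+s)/2, r₂ = (c/2-s)/2
  set r : ℝ := (c / 2 + s) / 2 with hr
  set r₂ : ℝ := (c / 2 - s) / 2 with hr₂
  have hrpos : 0 < r := by rw [hr]; linarith
  have hr₂pos : 0 < r₂ := by rw [hr₂]; linarith
  have hsumr : r + r₂ = c / 2 := by rw [hr, hr₂]; ring
  have hprodr : r * r₂ = d / 6 := by rw [hr, hr₂]; linear_combination (-(1:ℝ)/4) * hs2
  have hrz : z₁⁻¹ = r := by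
    have hone : z₁ * r = 1 := by
      rw [hz₁, hr, div_mul_div_comm, div_eq_one_iff_eq (by positivity)]
      linear_combination (-3:ℝ) * hs2
    exact (eq_inv_of_mul_eq_one_right hone).symm
  have hb : ∀ n : ℕ, 0 ≤ coeff (n + 1) φ⁻¹ - r * coeff n φ⁻¹ := by
    intro n
    induction n with
    | zero =>
      rw [ha0, ha1, hr]; linarith
    | succ m ih =>
      have key : coeff (m + 1 + 1) φ⁻¹ - r * coeff (m + 1) φ⁻¹ =
          r₂ * (coeff (m + 1) φ⁻¹ - r * coeff m φ⁻¹) := by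
        have h2 := hrec m
        rw [show m + 1 + 1 = m + 2 from rfl, h2, ← hsumr, ← hprodr]
        ring
      rw [key]
      exact mul_nonneg (le_of_lt hr₂pos) ih
  have hak : ∀ k : ℕ, r ^ k ≤ coeff k φ⁻¹ := by
    intro k
    induction k with
    | zero => rw [pow_zero, ha0]
    | succ m ih =>
      have h1 := hb m
      have h2 : r * r ^ m ≤ r * coeff m φ⁻¹ :=
        mul_le_mul_of_nonneg_left ih (le_of_lt hrpos)
      calc r ^ (m + 1) = r * r ^ m := by ring
        _ ≤ r * coeff m φ⁻¹ := h2
        _ ≤ coeff (m + 1) φ⁻¹ := by linarith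
  intro k
  rw [hrz]
  exact hak k
end
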